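/- Let λ be a positive integer and τ = (λ + √(λ²+4))/2. The Lebesgue diameter of the constant-word cylinder Δ_k(λ) (all first k partial quotients equal to λ) satisfies (τ/(τ+1)) τ^{−2k} ≤ diam Δ_k(λ) ≤ ((λ²+4)τ/((τ+1)λ²)) τ^{−2k} for every k ≥ 1. -/

import Mathlib

open Real
/-- One step of the Gauss map iteration: `gaussIter n x = G^n(x)` where `G y = {1/y}`. -/
noncomputable def gaussIter (n : ℕ) (x : ℝ) : ℝ := (fun y => Int.fract y⁻¹)^[n] x

/-- `pq n x` is the `(n+1)`-st continued fraction partial quotient `a_{n+1}(x)`. -/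
noncomputable def pq (n : ℕ) (x : ℝ) : ℕ := ⌊(gaussIter n x)⁻¹⌋₊

/-- The rank-`k` cylinder `Δ(d_1, …, d_k)`, where `d i` stands for `d_{i+1}`. -/
noncomputable def cfCyl (k : ℕ) (d : ℕ → ℕ) : Set ℝ :=
  {x | x ∈ Set.Ioo (0 : ℝ) 1 ∧ Irrational x ∧ ∀ i < k, pq i x = d i}

/-- The constant-word cylinder `Δ_k(λ)`. -/
noncomputable def cfCylC (k : ℕ) (l : ℕ) : Set ℝ := cfCyl k (fun _ => l)

/-- τ(λ) = (λ + √(λ²+4))/2. -/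
noncomputable def tauCF (l : ℕ) : ℝ := (l + Real.sqrt (l ^ 2 + 4)) / 2

namespace CFAux

noncomputable def fs (l : ℕ) (t : ℝ) : ℝ := ((l : ℝ) + t)⁻¹

noncomputable def qd (l : ℕ) : ℕ → ℝ
  | 0 => 1
  | 1 => (l : ℝ)
  | (n+2) => (l : ℝ) * qd l (n+1) + qd l n

variable {l : ℕ}

lemma qd_zero : qd l 0 = 1 := rfl
lemma qd_one : qd l 1 = (l : ℝ) := rfl
lemma qd_rec (n : ℕ) : qd l (n+2) = (l:ℝ) * qd l (n+1) + qd l n := rfl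

lemma qd_ge_one (hl : 1 ≤ l) : ∀ n, 1 ≤ qd l n := by
  have h1 : (1:ℝ) ≤ (l:ℝ) := by exact_mod_cast hl
  intro n
  induction n using Nat.strong_induction_on with
  | _ n ih =>
    match n with
    | 0 => simp [qd_zero]
    | 1 => simpa [qd_one]
    | (m+2) =>
      have a := ih (m+1) (by omega)
      have b := ih m (by omega)
      rw [qd_rec]; nlinarith

lemma qd_pos (hl : 1 ≤ l) (n : ℕ) : 0 < qd l n :=
  lt_of_lt_of_le one_pos (qd_ge_one hl n)

lemma fs_pos (hl : 1 ≤ l) {t : ℝ} (ht : 0 ≤ t) : 0 < fs l t := by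
  have h1 : (1:ℝ) ≤ (l:ℝ) := by exact_mod_cast hl
  have : (0:ℝ) < (l:ℝ) + t := by linarith
  exact inv_pos.mpr this

lemma fs_mem (hl : 1 ≤ l) {t : ℝ} (ht : t ∈ Set.Ioo (0:ℝ) 1) :
    fs l t ∈ Set.Ioo (0:ℝ) 1 := by
  have h1 : (1:ℝ) ≤ (l:ℝ) := by exact_mod_cast hl
  refine ⟨fs_pos hl ht.1.le, ?_⟩
  rw [fs, inv_lt_one_iff₀]
  right; linarith [ht.1]

lemma fs_iter_mem (hl : 1 ≤ l) {t : ℝ} (ht : t ∈ Set.Ioo (0:ℝ) 1) (n : ℕ) :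
    (fs l)^[n] t ∈ Set.Ioo (0:ℝ) 1 := by
  induction n with
  | zero => simpa
  | succ n ih => rw [Function.iterate_succ_apply']; exact fs_mem hl ih

lemma fs_irrational {t : ℝ} (h : Irrational t) : Irrational (fs l t) :=
  (h.natCast_add l).inv

lemma fs_iter_irrational {t : ℝ} (h : Irrational t) (n : ℕ) :
    Irrational ((fs l)^[n] t) := by
  induction n with
  | zero => simpa
  | succ n ih => rw [Function.iterate_succ_apply']; exact fs_irrational ih

lemma inv_fs {t : ℝ} (ht : (l:ℝ) + t ≠ 0) : (fs l t)⁻¹ = (l:ℝ) + t := by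
  rw [fs, inv_inv]

lemma fract_inv_fs (hl : 1 ≤ l) {t : ℝ} (h0 : 0 ≤ t) (h1 : t < 1) :
    Int.fract (fs l t)⁻¹ = t := by
  have h1l : (1:ℝ) ≤ (l:ℝ) := by exact_mod_cast hl
  rw [inv_fs (by linarith), show ((l:ℝ) + t = ((l:ℤ):ℝ) + t) by push_cast; ring,
    Int.fract_intCast_add, Int.fract_eq_self.mpr ⟨h0, h1⟩]

lemma gaussIter_fs_iter (hl : 1 ≤ l) {t : ℝ} (ht : t ∈ Set.Ioo (0:ℝ) 1) (n m : ℕ) :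
    gaussIter n ((fs l)^[n + m] t) = (fs l)^[m] t := by
  induction n with
  | zero => simp [gaussIter]
  | succ n ih =>
    have hmem : (fs l)^[n + m] t ∈ Set.Ioo (0:ℝ) 1 := fs_iter_mem hl ht _
    have hG : Int.fract ((fs l)^[n + 1 + m] t)⁻¹ = (fs l)^[n + m] t := by
      rw [show n + 1 + m = (n + m) + 1 by ring, Function.iterate_succ_apply']
      exact fract_inv_fs hl hmem.1.le hmem.2
    rw [gaussIter, Function.iterate_succ_apply]
    show gaussIter n (Int.fract ((fs l)^[n+1+m] t)⁻¹) = (fs l)^[m] t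
    rw [hG]; exact ih

lemma pq_fs_iter (hl : 1 ≤ l) {t : ℝ} (ht : t ∈ Set.Ioo (0:ℝ) 1) {k i : ℕ} (hik : i < k) :
    pq i ((fs l)^[k] t) = l := by
  obtain ⟨m, rfl⟩ : ∃ m, k = i + (m + 1) := ⟨k - i - 1, by omega⟩
  rw [pq, gaussIter_fs_iter hl ht i (m+1)]
  have hu : (fs l)^[m] t ∈ Set.Ioo (0:ℝ) 1 := fs_iter_mem hl ht m
  have h1l : (1:ℝ) ≤ (l:ℝ) := by exact_mod_cast hl
  rw [Function.iterate_succ_apply', inv_fs (by linarith [hu.1])]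
  have hpos : (0:ℝ) ≤ (l:ℝ) + (fs l)^[m] t := by linarith [hu.1]
  rw [Nat.floor_eq_iff' (by omega)]
  constructor
  · linarith [hu.1]
  · push_cast; linarith [hu.2]

lemma fs_iter_mem_cyl (hl : 1 ≤ l) (k : ℕ) {t : ℝ} (ht : t ∈ Set.Ioo (0:ℝ) 1)
    (hirr : Irrational t) : (fs l)^[k] t ∈ cfCylC k l :=
  ⟨fs_iter_mem hl ht k, fs_iter_irrational hirr k, fun _ hik => pq_fs_iter hl ht hik⟩

lemma cyl_subset (hl : 1 ≤ l) (k : ℕ) :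
    ∀ x ∈ cfCylC k l, ∃ t ∈ Set.Ioo (0:ℝ) 1, x = (fs l)^[k] t := by
  induction k with
  | zero => intro x hx; exact ⟨x, hx.1, rfl⟩
  | succ k ih =>
    rintro x ⟨hx01, hxirr, hpq⟩
    have hxinv_pos : 0 < x⁻¹ := inv_pos.mpr hx01.1
    have h0 : pq 0 x = l := hpq 0 (by omega)
    have hfl : (⌊x⁻¹⌋ : ℝ) = (l : ℝ) := by
      rw [← Int.natCast_floor_eq_floor hxinv_pos.le]
      have : ⌊x⁻¹⌋₊ = l := by simpa [pq, gaussIter] using h0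
      rw [this]; push_cast; ring
    set x' : ℝ := Int.fract x⁻¹ with hx'def
    have hx'eq : x' = x⁻¹ - (l:ℝ) := by rw [hx'def, Int.fract, hfl]
    have hx'irr : Irrational x' := by
      rw [hx'eq]; exact (hxirr.inv).sub_natCast l
    have hx'mem : x' ∈ Set.Ioo (0:ℝ) 1 := by
      refine ⟨lt_of_le_of_ne (Int.fract_nonneg _) ?_, Int.fract_lt_one _⟩
      intro h; exact (hx'irr.ne_int 0) (by rw [← h]; norm_num)
    have hxeq : x = fs l x' := by
      rw [fs, hx'eq]
      have : (l:ℝ) + (x⁻¹ - l) = x⁻¹ := by ring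
      rw [this, inv_inv]
    have hx'cyl : x' ∈ cfCylC k l := by
      refine ⟨hx'mem, hx'irr, fun i hik => ?_⟩
      have := hpq (i+1) (by omega)
      simpa [pq, gaussIter, Function.iterate_succ_apply] using this
    obtain ⟨t, ht, htt⟩ := ih x' hx'cyl
    exact ⟨t, ht, by rw [hxeq, htt]; exact (Function.iterate_succ_apply' (fs l) k t).symm⟩

lemma fs_sub (hl : 1 ≤ l) (t1 t2 : ℝ) (h1 : 0 ≤ t1) (h2 : 0 ≤ t2) :
    |fs l t1 - fs l t2| * (((l:ℝ) + t1) * ((l:ℝ) + t2)) = |t1 - t2| := by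
  have h1l : (1:ℝ) ≤ (l:ℝ) := by exact_mod_cast hl
  have d1 : (0:ℝ) < (l:ℝ) + t1 := by linarith
  have d2 : (0:ℝ) < (l:ℝ) + t2 := by linarith
  have key : fs l t1 - fs l t2 = (t2 - t1) / (((l:ℝ) + t1) * ((l:ℝ) + t2)) := by
    rw [fs, fs]; field_simp; ring
  rw [key, abs_div, abs_of_pos (mul_pos d1 d2), div_mul_cancel₀ _ (mul_pos d1 d2).ne',
    abs_sub_comm]

lemma fs_iter_sub (hl : 1 ≤ l) (n : ℕ) :
    ∀ t1 t2 : ℝ, 0 ≤ t1 → 0 ≤ t2 →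
    |(fs l)^[n+1] t1 - (fs l)^[n+1] t2| *
      ((qd l (n+1) + qd l n * t1) * (qd l (n+1) + qd l n * t2)) = |t1 - t2| := by
  induction n with
  | zero =>
    intro t1 t2 h1 h2
    have := fs_sub hl t1 t2 h1 h2
    simpa [qd_zero, qd_one, one_mul, add_comm] using this
  | succ n ih =>
    intro t1 t2 h1 h2
    have h1l : (1:ℝ) ≤ (l:ℝ) := by exact_mod_cast hl
    have key : ∀ t : ℝ, 0 ≤ t →
        (qd l (n+1) + qd l n * fs l t) * ((l:ℝ) + t) = qd l (n+2) + qd l (n+1) * t := by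
      intro t ht
      have dpos : ((l:ℝ) + t) ≠ 0 := by positivity
      rw [fs, qd_rec]; field_simp; ring
    have e1 := ih (fs l t1) (fs l t2) (fs_pos hl h1).le (fs_pos hl h2).le
    have ef : ∀ t : ℝ, (fs l)^[n+2] t = (fs l)^[n+1] (fs l t) := fun t =>
      Function.iterate_succ_apply (fs l) (n+1) t
    rw [ef, ef, ← key t1 h1, ← key t2 h2]
    calc |(fs l)^[n+1] (fs l t1) - (fs l)^[n+1] (fs l t2)| *
          ((qd l (n+1) + qd l n * fs l t1) * ((l:ℝ) + t1) *
            ((qd l (n+1) + qd l n * fs l t2) * ((l:ℝ) + t2)))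
        = (|(fs l)^[n+1] (fs l t1) - (fs l)^[n+1] (fs l t2)| *
            ((qd l (n+1) + qd l n * fs l t1) * (qd l (n+1) + qd l n * fs l t2))) *
            (((l:ℝ) + t1) * ((l:ℝ) + t2)) := by ring
      _ = |fs l t1 - fs l t2| * (((l:ℝ) + t1) * ((l:ℝ) + t2)) := by rw [e1]
      _ = |t1 - t2| := fs_sub hl t1 t2 h1 h2

lemma dist_pair_le (hl : 1 ≤ l) (n : ℕ) {t1 t2 : ℝ}
    (h1 : t1 ∈ Set.Icc (0:ℝ) 1) (h2 : t2 ∈ Set.Icc (0:ℝ) 1) :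
    |(fs l)^[n+1] t1 - (fs l)^[n+1] t2| *
      (qd l (n+1) * (qd l (n+1) + qd l n)) ≤ 1 := by
  have hq1 := qd_ge_one hl (n+1)
  have hq0 := qd_ge_one hl n
  have hA1 : 0 < qd l (n+1) + qd l n * t1 := by nlinarith [h1.1]
  have hA2 : 0 < qd l (n+1) + qd l n * t2 := by nlinarith [h2.1]
  have hf := fs_iter_sub hl n t1 t2 h1.1 h2.1
  have hQ := qd_pos hl (n+1)
  have hP := qd_pos hl n
  have habs : |t1 - t2| * (qd l (n+1) * (qd l (n+1) + qd l n)) ≤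
      (qd l (n+1) + qd l n * t1) * (qd l (n+1) + qd l n * t2) := by
    have k1 : 0 ≤ qd l (n+1) * qd l (n+1) * (1 - t1 + t2) :=
      mul_nonneg (mul_nonneg hQ.le hQ.le) (by linarith [h1.2, h2.1])
    have k2 : 0 ≤ qd l (n+1) * qd l (n+1) * (1 - t2 + t1) :=
      mul_nonneg (mul_nonneg hQ.le hQ.le) (by linarith [h2.2, h1.1])
    have k3 : 0 ≤ qd l (n+1) * qd l n * t2 :=
      mul_nonneg (mul_nonneg hQ.le hP.le) h2.1
    have k4 : 0 ≤ qd l (n+1) * qd l n * t1 :=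
      mul_nonneg (mul_nonneg hQ.le hP.le) h1.1
    have k5 : 0 ≤ qd l n * qd l n * (t1 * t2) :=
      mul_nonneg (mul_nonneg hP.le hP.le) (mul_nonneg h1.1 h2.1)
    rcases abs_cases (t1 - t2) with ⟨he, _⟩ | ⟨he, _⟩ <;> rw [he] <;> nlinarith [k1, k2, k3, k4, k5]
  have hAA : (0:ℝ) < (qd l (n+1) + qd l n * t1) * (qd l (n+1) + qd l n * t2) :=
    mul_pos hA1 hA2
  rw [← mul_le_mul_iff_of_pos_right hAA]
  calc |(fs l)^[n+1] t1 - (fs l)^[n+1] t2| * (qd l (n+1) * (qd l (n+1) + qd l n)) *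
        ((qd l (n+1) + qd l n * t1) * (qd l (n+1) + qd l n * t2))
      = (|(fs l)^[n+1] t1 - (fs l)^[n+1] t2| *
          ((qd l (n+1) + qd l n * t1) * (qd l (n+1) + qd l n * t2))) *
          (qd l (n+1) * (qd l (n+1) + qd l n)) := by ring
    _ = |t1 - t2| * (qd l (n+1) * (qd l (n+1) + qd l n)) := by rw [hf]
    _ ≤ (qd l (n+1) + qd l n * t1) * (qd l (n+1) + qd l n * t2) := habs
    _ = 1 * ((qd l (n+1) + qd l n * t1) * (qd l (n+1) + qd l n * t2)) := by ring

lemma diam_le (hl : 1 ≤ l) (n : ℕ) :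
    Metric.diam (cfCylC (n+1) l) ≤ 1 / (qd l (n+1) * (qd l (n+1) + qd l n)) := by
  have hB : (0:ℝ) < qd l (n+1) * (qd l (n+1) + qd l n) := by
    have := qd_pos hl (n+1); have := qd_pos hl n; positivity
  apply Metric.diam_le_of_forall_dist_le (by positivity)
  intro x hx y hy
  obtain ⟨t1, ht1, rfl⟩ := cyl_subset hl (n+1) x hx
  obtain ⟨t2, ht2, rfl⟩ := cyl_subset hl (n+1) y hy
  rw [Real.dist_eq, le_div_iff₀ hB]
  exact dist_pair_le hl n (Set.Ioo_subset_Icc_self ht1) (Set.Ioo_subset_Icc_self ht2)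

lemma fs_iter_contAt (hl : 1 ≤ l) (n : ℕ) :
    ∀ t : ℝ, 0 ≤ t → ContinuousAt ((fs l)^[n]) t := by
  induction n with
  | zero => intro t _; simpa using continuousAt_id
  | succ n ih =>
    intro t ht
    have h1l : (1:ℝ) ≤ (l:ℝ) := by exact_mod_cast hl
    have hfs : ContinuousAt (fs l) t := by
      apply ContinuousAt.inv₀
      · exact (continuous_const.add continuous_id).continuousAt
      · intro h; have : (0:ℝ) < (l:ℝ) + t := by linarith
        linarith [this.ne' h]
    rw [Function.iterate_succ]
    exact ContinuousAt.comp (ih (fs l t) (fs_pos hl ht).le) hfs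

lemma endpoint_mem_closure (hl : 1 ≤ l) (k : ℕ) {u : ℝ} (hu : u ∈ Set.Icc (0:ℝ) 1) :
    (fs l)^[k] u ∈ closure (cfCylC k l) := by
  have hIoo : Set.Ioo (0:ℝ) 1 ⊆
      closure (Set.Ioo (0:ℝ) 1 ∩ {x : ℝ | Irrational x}) :=
    dense_irrational.open_subset_closure_inter isOpen_Ioo
  have hu' : u ∈ closure (Set.Ioo (0:ℝ) 1 ∩ {x : ℝ | Irrational x}) := by
    have h1 : u ∈ closure (Set.Ioo (0:ℝ) 1) := by
      rw [closure_Ioo (by norm_num : (0:ℝ) ≠ 1)]; exact hu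
    have := closure_mono hIoo h1
    rwa [closure_closure] at this
  have hmem := mem_closure_image (fs_iter_contAt hl k u hu.1) hu'
  refine closure_mono ?_ hmem
  rintro _ ⟨t, ⟨ht, htirr⟩, rfl⟩
  exact fs_iter_mem_cyl hl k ht htirr

lemma le_diam (hl : 1 ≤ l) (n : ℕ) :
    1 / (qd l (n+1) * (qd l (n+1) + qd l n)) ≤ Metric.diam (cfCylC (n+1) l) := by
  have hB : (0:ℝ) < qd l (n+1) * (qd l (n+1) + qd l n) := by
    have := qd_pos hl (n+1); have := qd_pos hl n; positivity
  have ha := endpoint_mem_closure hl (n+1) (Set.mem_Icc.mpr ⟨le_refl 0, by norm_num⟩)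
  have hb := endpoint_mem_closure hl (n+1) (Set.mem_Icc.mpr ⟨by norm_num, le_refl 1⟩)
  have hbd : Bornology.IsBounded (closure (cfCylC (n+1) l)) := by
    apply Bornology.IsBounded.subset (Metric.isBounded_Icc (0:ℝ) 1)
    have : cfCylC (n+1) l ⊆ Set.Icc (0:ℝ) 1 := fun x hx => Set.Ioo_subset_Icc_self hx.1
    calc closure (cfCylC (n+1) l) ⊆ closure (Set.Icc (0:ℝ) 1) := closure_mono this
      _ = Set.Icc 0 1 := IsClosed.closure_eq isClosed_Icc
  have hd := Metric.dist_le_diam_of_mem hbd ha hb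
  rw [Metric.diam_closure] at hd
  have hval := fs_iter_sub hl n 0 1 le_rfl zero_le_one
  simp only [mul_zero, add_zero, mul_one] at hval
  have : dist ((fs l)^[n+1] (0:ℝ)) ((fs l)^[n+1] (1:ℝ)) =
      1 / (qd l (n+1) * (qd l (n+1) + qd l n)) := by
    rw [Real.dist_eq, eq_div_iff hB.ne']
    calc |(fs l)^[n+1] (0:ℝ) - (fs l)^[n+1] 1| * (qd l (n+1) * (qd l (n+1) + qd l n))
        = |(fs l)^[n+1] (0:ℝ) - (fs l)^[n+1] 1| * (qd l (n+1) * (qd l (n+1) + qd l n * 1)) := by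
          ring_nf
      _ = |(0:ℝ) - 1| := by rw [← hval]; ring
      _ = 1 := by norm_num
  rw [← this]; exact hd

lemma tau_sq (l : ℕ) : tauCF l ^ 2 = (l : ℝ) * tauCF l + 1 := by
  have hs : Real.sqrt ((l:ℝ) ^ 2 + 4) ^ 2 = (l:ℝ) ^ 2 + 4 :=
    Real.sq_sqrt (by positivity)
  rw [tauCF]; nlinarith [hs]

lemma tau_gt_one (hl : 1 ≤ l) : 1 < tauCF l := by
  have h1l : (1:ℝ) ≤ (l:ℝ) := by exact_mod_cast hl
  have hs : (2:ℝ) ≤ Real.sqrt ((l:ℝ) ^ 2 + 4) := by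
    rw [show (2:ℝ) = Real.sqrt 4 by rw [show (4:ℝ) = 2^2 by norm_num, Real.sqrt_sq]; norm_num]
    exact Real.sqrt_le_sqrt (by nlinarith [sq_nonneg ((l:ℝ))])
  rw [tauCF]; linarith

lemma tau_pow_rec (l : ℕ) (n : ℕ) :
    tauCF l ^ (n + 2) = (l:ℝ) * tauCF l ^ (n + 1) + tauCF l ^ n := by
  have := tau_sq l
  calc tauCF l ^ (n+2) = tauCF l ^ n * tauCF l ^ 2 := by ring
    _ = tauCF l ^ n * ((l:ℝ) * tauCF l + 1) := by rw [this]
    _ = (l:ℝ) * tauCF l ^ (n+1) + tauCF l ^ n := by ring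

lemma qd_le_tau_pow (hl : 1 ≤ l) : ∀ n, qd l n ≤ tauCF l ^ n := by
  have ht := tau_gt_one hl
  intro n
  induction n using Nat.strong_induction_on with
  | _ n ih =>
    match n with
    | 0 => simp [qd_zero]
    | 1 =>
      rw [qd_one, pow_one, tauCF]
      have hs : (l:ℝ) ≤ Real.sqrt ((l:ℝ)^2 + 4) := by
        nlinarith [Real.sq_sqrt (show (0:ℝ) ≤ (l:ℝ)^2 + 4 by positivity),
          Real.sqrt_nonneg ((l:ℝ)^2 + 4)]
      linarith
    | (m+2) =>
      have a := ih (m+1) (by omega)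
      have b := ih m (by omega)
      have hlpos : (0:ℝ) ≤ (l:ℝ) := by positivity
      rw [qd_rec, tau_pow_rec]
      have := mul_le_mul_of_nonneg_left a hlpos
      linarith

lemma tau_pow_le_qd (hl : 1 ≤ l) :
    ∀ n, (tauCF l ^ 2 - 1) / (tauCF l ^ 2 + 1) * tauCF l ^ n ≤ qd l n := by
  have ht := tau_gt_one hl
  have htpos : (0:ℝ) < tauCF l := by linarith
  have hlt : (l:ℝ) * tauCF l = tauCF l ^ 2 - 1 := by have := tau_sq l; linarith
  have hden : (0:ℝ) < tauCF l ^ 2 + 1 := by positivity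
  have hnum : (0:ℝ) < tauCF l ^ 2 - 1 := by nlinarith
  intro n
  induction n using Nat.strong_induction_on with
  | _ n ih =>
    match n with
    | 0 =>
      rw [qd_zero, pow_zero, mul_one, div_le_one hden]; linarith
    | 1 =>
      rw [qd_one, pow_one, div_mul_eq_mul_div, div_le_iff₀ hden]
      nlinarith [hlt]
    | (m+2) =>
      have a := ih (m+1) (by omega)
      have b := ih m (by omega)
      have hlpos : (0:ℝ) ≤ (l:ℝ) := by positivity
      rw [qd_rec]
      have hrec := tau_pow_rec l m
      rw [hrec]
      have := mul_le_mul_of_nonneg_left a hlpos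
      have hc : (tauCF l ^ 2 - 1) / (tauCF l ^ 2 + 1) *
          ((l:ℝ) * tauCF l ^ (m+1) + tauCF l ^ m) =
          (l:ℝ) * ((tauCF l ^ 2 - 1) / (tauCF l ^ 2 + 1) * tauCF l ^ (m+1)) +
          (tauCF l ^ 2 - 1) / (tauCF l ^ 2 + 1) * tauCF l ^ m := by ring
      rw [hc]; linarith

lemma tau_c_sq_identity (hl : 1 ≤ l) :
    ((l:ℝ)^2 + 4) * ((tauCF l ^ 2 - 1) / (tauCF l ^ 2 + 1))^2 = (l:ℝ)^2 := by
  have ht := tau_gt_one hl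
  have hlt : (l:ℝ) * tauCF l = tauCF l ^ 2 - 1 := by have := tau_sq l; linarith
  have hden : (tauCF l ^ 2 + 1) ≠ 0 := by positivity
  have key : ((l:ℝ)^2 + 4) * (tauCF l ^ 2 - 1)^2 = (l:ℝ)^2 * ((tauCF l ^ 2 + 1)^2) := by
    linear_combination (-4*((l:ℝ)*tauCF l + tauCF l^2 - 1)) * hlt
  rw [div_pow, ← mul_div_assoc, div_eq_iff (pow_ne_zero 2 hden)]
  exact key

end CFAux

open CFAux in
/-- Two-sided bounds for the diameter of the constant-word cylinder `Δ_k(λ)`. -/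
theorem diam_cfCylC_bounds (l : ℕ) (hl : 1 ≤ l) (k : ℕ) (hk : 1 ≤ k) :
    (tauCF l / (tauCF l + 1)) * tauCF l ^ (-(2 * k : ℤ)) ≤ Metric.diam (cfCylC k l) ∧
      Metric.diam (cfCylC k l) ≤
        (((l : ℝ) ^ 2 + 4) * tauCF l / ((tauCF l + 1) * (l : ℝ) ^ 2)) *
          tauCF l ^ (-(2 * k : ℤ)) := by
  obtain ⟨n, rfl⟩ : ∃ n, k = n + 1 := ⟨k - 1, by omega⟩
  have ht := tau_gt_one hl
  have htpos : (0:ℝ) < tauCF l := by linarith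
  have hl1 : (1:ℝ) ≤ (l:ℝ) := by exact_mod_cast hl
  have hQ := qd_pos hl (n+1)
  have hP := qd_pos hl n
  have hBpos : (0:ℝ) < qd l (n+1) * (qd l (n+1) + qd l n) := by positivity
  have hzpow : tauCF l ^ (-(2 * ((n + 1 : ℕ) : ℤ))) = (tauCF l ^ (2*(n+1)))⁻¹ := by
    rw [zpow_neg]; norm_cast
  have hexp : 2*(n+1) = 2*n+2 := by ring
  constructor
  · -- lower bound
    refine le_trans ?_ (le_diam hl n)
    rw [hzpow]
    have e : tauCF l / (tauCF l + 1) * (tauCF l ^ (2*(n+1)))⁻¹ =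
        tauCF l / ((tauCF l + 1) * tauCF l ^ (2*(n+1))) := by
      rw [div_eq_mul_inv, div_eq_mul_inv, mul_inv, mul_assoc]
    have hpos2 : (0:ℝ) < (tauCF l + 1) * tauCF l ^ (2*(n+1)) := by positivity
    rw [e, div_le_div_iff₀ hpos2 hBpos]
    have hQle := qd_le_tau_pow hl (n+1)
    have hPle := qd_le_tau_pow hl n
    have h2 : qd l (n+1) * (qd l (n+1) + qd l n) ≤
        tauCF l ^ (n+1) * (tauCF l ^ (n+1) + tauCF l ^ n) :=
      mul_le_mul hQle (add_le_add hQle hPle) (by linarith) (by positivity)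
    have h3 : tauCF l * (tauCF l ^ (n+1) * (tauCF l ^ (n+1) + tauCF l ^ n)) =
        (tauCF l + 1) * tauCF l ^ (2*(n+1)) * 1 := by
      rw [hexp]; ring
    nlinarith [h2, h3, mul_le_mul_of_nonneg_left h2 htpos.le]
  · -- upper bound
    refine le_trans (diam_le hl n) ?_
    rw [hzpow]
    have e : ((l:ℝ)^2 + 4) * tauCF l / ((tauCF l + 1) * (l:ℝ)^2) * (tauCF l ^ (2*(n+1)))⁻¹ =
        ((l:ℝ)^2 + 4) * tauCF l / ((tauCF l + 1) * (l:ℝ)^2 * tauCF l ^ (2*(n+1))) := by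
      rw [div_eq_mul_inv, div_eq_mul_inv, mul_inv ((tauCF l + 1) * (l:ℝ)^2), mul_assoc]
    have hpos2 : (0:ℝ) < (tauCF l + 1) * (l:ℝ)^2 * tauCF l ^ (2*(n+1)) := by positivity
    rw [e, div_le_div_iff₀ hBpos hpos2]
    set c : ℝ := (tauCF l ^ 2 - 1) / (tauCF l ^ 2 + 1) with hc
    have hnum : (0:ℝ) < tauCF l ^ 2 - 1 := by nlinarith
    have hden : (0:ℝ) < tauCF l ^ 2 + 1 := by positivity
    have hcpos : 0 < c := div_pos hnum hden
    have hQge := tau_pow_le_qd hl (n+1)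
    have hPge := tau_pow_le_qd hl n
    have hBge : c * tauCF l ^ (n+1) * (c * tauCF l ^ (n+1) + c * tauCF l ^ n) ≤
        qd l (n+1) * (qd l (n+1) + qd l n) :=
      mul_le_mul hQge (add_le_add hQge hPge) (by positivity) hQ.le
    have hid := tau_c_sq_identity hl
    have m1 : ((l:ℝ)^2+4) * tauCF l *
          (c * tauCF l ^ (n+1) * (c * tauCF l ^ (n+1) + c * tauCF l ^ n)) ≤
        ((l:ℝ)^2+4) * tauCF l * (qd l (n+1) * (qd l (n+1) + qd l n)) :=
      mul_le_mul_of_nonneg_left hBge (by positivity)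
    have m2 : ((l:ℝ)^2+4) * tauCF l *
          (c * tauCF l ^ (n+1) * (c * tauCF l ^ (n+1) + c * tauCF l ^ n)) =
        (((l:ℝ)^2+4) * c^2) * ((tauCF l + 1) * tauCF l ^ (2*(n+1))) := by
      rw [hexp]; ring
    have hid' : ((l:ℝ)^2 + 4) * c^2 = (l:ℝ)^2 := by rw [hc]; exact hid
    rw [hid'] at m2
    nlinarith [m1, m2]
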